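/- Let v^1, ..., v^n be vectors in ℝ^d and let 2 ≤ m < n. Suppose v^1[0] > 0, v^k[0] < 0 for all 2 ≤ k ≤ m, and v^i[0] = 0 for all i > m. For 2 ≤ k ≤ m set w^k := v^1[0] · v^k − v^k[0] · v^1. Then for every i > m, the vector v^i is a nonnegative combination of {v^j : j ≠ i} if and only if v^i is a nonnegative combination of the family {v^j : j > m, j ≠ i} ∪ {w^2, ..., w^m}. -/

import Mathlib

/-- Reduction claim of the generalized Remark 4.5.  With 0-based indexing,
`v 0` is the paper's `v^1`, the indices `k` with `1 ≤ k.val < m` are the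
paper's `v^2, …, v^m` (negative first coordinate), and the indices with
`m ≤ i.val` are the paper's `v^{m+1}, …, v^n` (first coordinate zero).  For
each such `i`, `v i` is a nonnegative combination of all other generators iff
it is a nonnegative combination of `{v j : m ≤ j.val, j ≠ i}` together with
the modified vectors `w^k = v^1[0]·v^k − v^k[0]·v^1`. -/
theorem statement_8 (n d m : ℕ) (hd : 0 < d) (hm2 : 2 ≤ m) (hmn : m < n)
    (v : Fin n → Fin d → ℝ)
    (h1 : 0 < v ⟨0, by omega⟩ ⟨0, hd⟩)
    (hneg : ∀ k : Fin n, 1 ≤ (k : ℕ) → (k : ℕ) < m → v k ⟨0, hd⟩ < 0)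
    (hzero : ∀ i : Fin n, m ≤ (i : ℕ) → v i ⟨0, hd⟩ = 0)
    (w : Fin n → Fin d → ℝ)
    (hw : ∀ k : Fin n, 1 ≤ (k : ℕ) → (k : ℕ) < m →
      w k = v ⟨0, by omega⟩ ⟨0, hd⟩ • v k - v k ⟨0, hd⟩ • v ⟨0, by omega⟩) :
    ∀ i : Fin n, m ≤ (i : ℕ) →
      ((∃ x : Fin n → ℝ, (∀ j, 0 ≤ x j) ∧
          v i = ∑ j ∈ Finset.univ.erase i, x j • v j) ↔
        (∃ x y : Fin n → ℝ, (∀ j, 0 ≤ x j) ∧ (∀ k, 0 ≤ y k) ∧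
          v i = (∑ j ∈ Finset.univ.filter (fun j : Fin n => m ≤ (j : ℕ) ∧ j ≠ i),
              x j • v j) +
            ∑ k ∈ Finset.univ.filter
                (fun k : Fin n => 1 ≤ (k : ℕ) ∧ (k : ℕ) < m),
              y k • w k)) := by
  intro i hi
  have hn0 : 0 < n := by omega
  set z : Fin n := ⟨0, hn0⟩ with hzdef
  set e0 : Fin d := ⟨0, hd⟩ with he0def
  set a : ℝ := v z e0 with hadef
  have ha : 0 < a := h1
  have hane : a ≠ 0 := ne_of_gt ha
  have hw' : ∀ k : Fin n, 1 ≤ (k : ℕ) → (k : ℕ) < m →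
      w k = a • v k - v k e0 • v z := hw
  set K : Finset (Fin n) :=
    Finset.univ.filter (fun k : Fin n => 1 ≤ (k : ℕ) ∧ (k : ℕ) < m) with hKdef
  set F : Finset (Fin n) :=
    Finset.univ.filter (fun j : Fin n => m ≤ (j : ℕ) ∧ j ≠ i) with hFdef
  have hmemK : ∀ k : Fin n, k ∈ K ↔ (1 ≤ (k : ℕ) ∧ (k : ℕ) < m) := by
    intro k; simp [hKdef]
  have hmemF : ∀ j : Fin n, j ∈ F ↔ (m ≤ (j : ℕ) ∧ j ≠ i) := by
    intro j; simp [hFdef]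
  have hsplit : Finset.univ.erase i = insert z (K ∪ F) := by
    ext j
    simp only [Finset.mem_erase, Finset.mem_insert, Finset.mem_union, hmemK, hmemF,
      Finset.mem_univ, and_true, ne_eq, Fin.ext_iff]
    show (¬ (j : ℕ) = (i : ℕ)) ↔ _
    have hz0 : (z : ℕ) = 0 := rfl
    constructor
    · intro h; omega
    · rintro (h | h | h) <;> omega
  have hznot : z ∉ K ∪ F := by
    simp only [Finset.mem_union, hmemK, hmemF, Fin.ext_iff]
    push_neg
    have hz0 : (z : ℕ) = 0 := rfl
    constructor
    · intro h; omega
    · intro h; omega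
  have hdisj : Disjoint K F := by
    rw [Finset.disjoint_left]
    intro k hk hk'
    rw [hmemK] at hk; rw [hmemF] at hk'
    omega
  have hsum : ∀ f : Fin n → (Fin d → ℝ),
      ∑ j ∈ Finset.univ.erase i, f j = f z + (∑ k ∈ K, f k + ∑ j ∈ F, f j) := by
    intro f
    rw [hsplit, Finset.sum_insert hznot, Finset.sum_union hdisj]
  have hkey : ∀ y : Fin n → ℝ,
      ∑ k ∈ K, y k • w k
        = ∑ k ∈ K, (y k * a) • v k - (∑ k ∈ K, y k * v k e0) • v z := by
    intro y
    rw [Finset.sum_smul, ← Finset.sum_sub_distrib]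
    refine Finset.sum_congr rfl fun k hk => ?_
    rw [hmemK] at hk
    rw [hw' k hk.1 hk.2, smul_sub, smul_smul, smul_smul, mul_comm (y k) a, mul_comm a (y k)]
  have hvF : ∀ j ∈ F, v j e0 = 0 := fun j hj => hzero j ((hmemF j).1 hj).1
  constructor
  · rintro ⟨x, hx, hexp⟩
    rw [hsum] at hexp
    have h0 : (0 : ℝ) = x z * a + ∑ k ∈ K, x k * v k e0 := by
      have := congrFun hexp e0
      rw [hzero i hi] at this
      simp only [Pi.add_apply, Pi.smul_apply, Finset.sum_apply, smul_eq_mul] at this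
      have hF0 : ∑ j ∈ F, x j * v j e0 = 0 :=
        Finset.sum_eq_zero fun j hj => by rw [hvF j hj, mul_zero]
      rw [hF0, add_zero, ← hadef] at this
      exact this
    have hcoef : ∑ k ∈ K, x k * v k e0 = -(x z * a) := by linarith
    refine ⟨x, fun k => x k / a, hx, fun k => div_nonneg (hx k) ha.le, ?_⟩
    rw [hkey, hexp]
    have e1 : ∑ k ∈ K, (x k / a * a) • v k = ∑ k ∈ K, x k • v k :=
      Finset.sum_congr rfl fun k _ => by rw [div_mul_cancel₀ _ hane]
    have e2 : ∑ k ∈ K, x k / a * v k e0 = -(x z) := by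
      have hstep : ∑ k ∈ K, x k / a * v k e0 = (∑ k ∈ K, x k * v k e0) / a := by
        rw [Finset.sum_div]
        exact Finset.sum_congr rfl fun k _ => by ring
      rw [hstep, hcoef, neg_div, mul_div_assoc, div_self hane, mul_one]
    rw [e1, e2, neg_smul]
    abel
  · rintro ⟨x, y, hx, hy, hexp⟩
    refine ⟨fun j => if j = z then ∑ k ∈ K, y k * (-(v k e0))
      else if (j : ℕ) < m then y j * a else x j, fun j => ?_, ?_⟩
    · by_cases hj : j = z
      · simp only [hj, if_pos rfl]
        refine Finset.sum_nonneg fun k hk => ?_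
        rw [hmemK] at hk
        exact mul_nonneg (hy k) (by linarith [hneg k hk.1 hk.2])
      · simp only [if_neg hj]
        by_cases hj' : (j : ℕ) < m
        · simp only [if_pos hj']; exact mul_nonneg (hy j) ha.le
        · simp only [if_neg hj']; exact hx j
    · rw [hsum, hexp, hkey]
      have e1 : ∑ k ∈ K, (if k = z then ∑ k ∈ K, y k * (-(v k e0))
          else if (k : ℕ) < m then y k * a else x k) • v k
          = ∑ k ∈ K, (y k * a) • v k := by
        refine Finset.sum_congr rfl fun k hk => ?_
        rw [hmemK] at hk
        have : k ≠ z := by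
          intro h; rw [h] at hk; simp [hzdef] at hk
        rw [if_neg this, if_pos hk.2]
      have e2 : ∑ j ∈ F, (if j = z then ∑ k ∈ K, y k * (-(v k e0))
          else if (j : ℕ) < m then y j * a else x j) • v j
          = ∑ j ∈ F, x j • v j := by
        refine Finset.sum_congr rfl fun j hj => ?_
        rw [hmemF] at hj
        have h1 : j ≠ z := by
          intro h
          rw [h] at hj
          have : (z : ℕ) = 0 := rfl
          omega
        have h2 : ¬ (j : ℕ) < m := by omega
        rw [if_neg h1, if_neg h2]
      rw [e1, e2]
      simp only [reduceIte]
      have e3 : ∑ k ∈ K, y k * (-(v k e0)) = -(∑ k ∈ K, y k * v k e0) := by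
        rw [← Finset.sum_neg_distrib]
        exact Finset.sum_congr rfl fun k _ => by ring
      rw [e3, neg_smul]
      abel
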